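/- Let H be a real Hilbert space, F : H → H be continuously Fréchet differentiable with sup_{x∈H} ‖F′(x)‖ ≤ N₁ and (F′(h)ξ, ξ) ≥ 0 for all h, ξ ∈ H, and suppose F(y) = 0 for some y ∈ H. Let ε : [0,∞) → (0,∞) be continuously differentiable, z₀ ∈ H, and for each t let x(t) denote the unique solution of F(x) + ε(t)(x − z₀) = 0. Then t ↦ x(t) is continuously differentiable in the strong sense and ‖ẋ(t)‖ ≤ (|ε̇(t)|/ε(t))·‖y − z₀‖ for all t ∈ [0,∞). -/

import Mathlib

open Set Filter
open scoped RealInnerProductSpace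

lemma aux_mono {H : Type*} [NormedAddCommGroup H] [InnerProductSpace ℝ H]
    (F : H → H) (F' : H → H →L[ℝ] H)
    (hF' : ∀ x : H, HasFDerivAt F (F' x) x)
    (hpos : ∀ h ξ : H, 0 ≤ ⟪F' h ξ, ξ⟫) (a b : H) :
    0 ≤ ⟪F a - F b, a - b⟫ := by
  set v := a - b with hv
  set g : ℝ → ℝ := fun s => ⟪v, F (b + s • v)⟫ with hg
  have hγ : ∀ s : ℝ, HasDerivAt (fun s : ℝ => b + s • v) v s := by
    intro s
    simpa using ((hasDerivAt_id s).smul_const v).const_add b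
  have hgd : ∀ s : ℝ, HasDerivAt g ⟪v, F' (b + s • v) v⟫ s := by
    intro s
    have h1 : HasDerivAt (fun s : ℝ => F (b + s • v)) (F' (b + s • v) v) s :=
      (hF' (b + s • v)).comp_hasDerivAt s (hγ s)
    exact ((innerSL ℝ v).hasFDerivAt.comp_hasDerivAt s h1)
  have hmono : Monotone g := by
    apply monotone_of_deriv_nonneg (fun s => (hgd s).differentiableAt)
    intro s
    rw [(hgd s).deriv]
    rw [real_inner_comm]
    exact hpos _ _
  have h01 : g 0 ≤ g 1 := hmono (by norm_num)
  have hg0 : g 0 = ⟪v, F b⟫ := by simp [hg]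
  have hg1 : g 1 = ⟪v, F a⟫ := by simp [hg, hv]
  rw [real_inner_comm, inner_sub_right]
  rw [hg0, hg1] at h01
  linarith

lemma aux_surj {H : Type*} [NormedAddCommGroup H] [InnerProductSpace ℝ H] [CompleteSpace H]
    (A : H →L[ℝ] H) (c : ℝ) (hc : 0 < c)
    (hcoer : ∀ ξ : H, c * ‖ξ‖ * ‖ξ‖ ≤ ⟪A ξ, ξ⟫) (z : H) : ∃ w, A w = z := by
  set B : H →L[ℝ] H →L[ℝ] ℝ := (innerSL ℝ).comp A with hB
  have hBapp : ∀ u w : H, B u w = ⟪A u, w⟫ := fun u w => rfl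
  have hcoB : IsCoercive B := ⟨c, hc, fun u => by rw [hBapp]; exact hcoer u⟩
  set e := hcoB.continuousLinearEquivOfBilin with he
  refine ⟨e.symm z, ?_⟩
  apply ext_inner_right ℝ
  intro w
  rw [← hBapp, ← hcoB.continuousLinearEquivOfBilin_apply, e.apply_symm_apply]

set_option maxHeartbeats 1000000 in
theorem regularized_trajectory_derivative_bound
    {H : Type*} [NormedAddCommGroup H] [InnerProductSpace ℝ H] [CompleteSpace H]
    (F : H → H) (F' : H → H →L[ℝ] H) (N₁ : ℝ)
    (hF' : ∀ x : H, HasFDerivAt F (F' x) x)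
    (hF'cont : Continuous F')
    (hN₁ : ∀ x : H, ‖F' x‖ ≤ N₁)
    (hpos : ∀ h ξ : H, 0 ≤ ⟪F' h ξ, ξ⟫)
    (y : H) (hy : F y = 0)
    (ε : ℝ → ℝ) (ε' : ℝ → ℝ)
    (hεpos : ∀ t ∈ Ici (0 : ℝ), 0 < ε t)
    (hεd : ∀ t ∈ Ici (0 : ℝ), HasDerivWithinAt ε (ε' t) (Ici 0) t)
    (hε'c : ContinuousOn ε' (Ici 0))
    (z₀ : H) (x : ℝ → H)
    (hx : ∀ t ∈ Ici (0 : ℝ), F (x t) + ε t • (x t - z₀) = 0) :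
    ∃ x' : ℝ → H,
      (∀ t ∈ Ici (0 : ℝ), HasDerivWithinAt x (x' t) (Ici 0) t) ∧
      ContinuousOn x' (Ici 0) ∧
      ∀ t ∈ Ici (0 : ℝ), ‖x' t‖ ≤ |ε' t| / ε t * ‖y - z₀‖ := by
  have hmono : ∀ a b : H, 0 ≤ ⟪F a - F b, a - b⟫ := aux_mono F F' hF' hpos
  set A : ℝ → H →L[ℝ] H := fun t => F' (x t) + ε t • ContinuousLinearMap.id ℝ H with hAdef
  have hA : ∀ t (ξ : H), A t ξ = F' (x t) ξ + ε t • ξ := by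
    intro t ξ; simp [hAdef]
  have hAcoer : ∀ t ∈ Ici (0:ℝ), ∀ ξ : H, ε t * ‖ξ‖ * ‖ξ‖ ≤ ⟪A t ξ, ξ⟫ := by
    intro t ht ξ
    rw [hA, inner_add_left, real_inner_smul_left, real_inner_self_eq_norm_mul_norm]
    have := hpos (x t) ξ
    nlinarith [hpos (x t) ξ]
  have hAlow : ∀ t ∈ Ici (0:ℝ), ∀ ξ : H, ε t * ‖ξ‖ ≤ ‖A t ξ‖ := by
    intro t ht ξ
    rcases eq_or_ne ξ 0 with rfl | hξ
    · simp
    · have h1 := hAcoer t ht ξ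
      have h2 : ⟪A t ξ, ξ⟫ ≤ ‖A t ξ‖ * ‖ξ‖ := real_inner_le_norm _ _
      have h3 : (0:ℝ) < ‖ξ‖ := norm_pos_iff.mpr hξ
      nlinarith
  -- existence of u t with A t (u t) = x t - z₀
  have hu_ex : ∀ t : ℝ, ∃ w : H, t ∈ Ici (0:ℝ) → A t w = x t - z₀ := by
    intro t
    by_cases ht : t ∈ Ici (0:ℝ)
    · obtain ⟨w, hw⟩ := aux_surj (A t) (ε t) (hεpos t ht) (hAcoer t ht) (x t - z₀)
      exact ⟨w, fun _ => hw⟩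
    · exact ⟨0, fun h => absurd h ht⟩
  set u : ℝ → H := fun t => Classical.choose (hu_ex t) with hudef
  have hu : ∀ t ∈ Ici (0:ℝ), A t (u t) = x t - z₀ := fun t ht =>
    Classical.choose_spec (hu_ex t) ht
  -- ‖x t - z₀‖ ≤ ‖y - z₀‖
  have hxz : ∀ t ∈ Ici (0:ℝ), ‖x t - z₀‖ ≤ ‖y - z₀‖ := by
    intro t ht
    have hFx : F (x t) = -(ε t • (x t - z₀)) := by
      have := hx t ht; linear_combination (norm := abel) this
    have hm := hmono (x t) y
    rw [hy, sub_zero, hFx] at hm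
    have h1 : ε t * ⟪x t - z₀, x t - y⟫ ≤ 0 := by
      rw [inner_neg_left, real_inner_smul_left] at hm; linarith
    have h2 : ⟪x t - z₀, x t - y⟫ ≤ 0 := by nlinarith [hεpos t ht]
    have h3 : x t - y = (x t - z₀) - (y - z₀) := by abel
    rw [h3, inner_sub_right, real_inner_self_eq_norm_mul_norm] at h2
    have h4 := real_inner_le_norm (x t - z₀) (y - z₀)
    nlinarith [norm_nonneg (x t - z₀), norm_nonneg (y - z₀)]
  -- the basic difference identity
  have e2 : ∀ t ∈ Ici (0:ℝ), ∀ s ∈ Ici (0:ℝ),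
      ε t • (x s - x t) = -(F (x s) - F (x t)) - (ε s - ε t) • (x s - z₀) := by
    intro t ht s hs
    have h1 : F (x s) = -(ε s • (x s - z₀)) := by
      have := hx s hs; linear_combination (norm := abel) this
    have h2 : F (x t) = -(ε t • (x t - z₀)) := by
      have := hx t ht; linear_combination (norm := abel) this
    rw [h1, h2]; module
  -- Lipschitz-type bound
  have hdiff : ∀ t ∈ Ici (0:ℝ), ∀ s ∈ Ici (0:ℝ),
      ε t * ‖x s - x t‖ ≤ |ε s - ε t| * ‖y - z₀‖ := by
    intro t ht s hs
    have he := e2 t ht s hs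
    have hm := hmono (x s) (x t)
    have hstep : ε t * ⟪x s - x t, x s - x t⟫ =
        ⟪-(F (x s) - F (x t)) - (ε s - ε t) • (x s - z₀), x s - x t⟫ := by
      rw [← real_inner_smul_left, he]
    have hin : ε t * (‖x s - x t‖ * ‖x s - x t‖) =
        -⟪F (x s) - F (x t), x s - x t⟫ - (ε s - ε t) * ⟪x s - z₀, x s - x t⟫ := by
      rw [← real_inner_self_eq_norm_mul_norm, hstep, inner_sub_left, inner_neg_left,
        real_inner_smul_left]
    have hcs : |⟪x s - z₀, x s - x t⟫| ≤ ‖x s - z₀‖ * ‖x s - x t‖ :=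
      abs_real_inner_le_norm _ _
    have hb1 : -(ε s - ε t) * ⟪x s - z₀, x s - x t⟫ ≤ |ε s - ε t| * (‖x s - z₀‖ * ‖x s - x t‖) := by
      calc -(ε s - ε t) * ⟪x s - z₀, x s - x t⟫ ≤ |(ε s - ε t) * ⟪x s - z₀, x s - x t⟫| := by
            rw [← abs_neg]; rw [neg_mul]; exact le_abs_self _
        _ = |ε s - ε t| * |⟪x s - z₀, x s - x t⟫| := abs_mul _ _
        _ ≤ |ε s - ε t| * (‖x s - z₀‖ * ‖x s - x t‖) := by
            exact mul_le_mul_of_nonneg_left hcs (abs_nonneg _)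
    have hxs := hxz s hs
    rcases eq_or_lt_of_le (norm_nonneg (x s - x t)) with h0 | h0
    · rw [← h0, mul_zero]
      positivity
    · refine le_of_mul_le_mul_right ?_ h0
      nlinarith [mul_le_mul_of_nonneg_right
        (mul_le_mul_of_nonneg_left hxs (abs_nonneg (ε s - ε t))) h0.le]
  -- continuity of x on Ici 0
  have hxcont : ContinuousOn x (Ici (0:ℝ)) := by
    intro t ht
    rw [ContinuousWithinAt, tendsto_iff_norm_sub_tendsto_zero]
    have hεc : Filter.Tendsto ε (nhdsWithin t (Ici (0:ℝ))) (nhds (ε t)) :=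
      (hεd t ht).continuousWithinAt
    have hg : Filter.Tendsto (fun s => |ε s - ε t| * ‖y - z₀‖ / ε t)
        (nhdsWithin t (Ici (0:ℝ))) (nhds 0) := by
      have : Filter.Tendsto (fun s => |ε s - ε t|) (nhdsWithin t (Ici (0:ℝ))) (nhds 0) := by
        have h0 : Filter.Tendsto (fun s => ε s - ε t) (nhdsWithin t (Ici (0:ℝ))) (nhds 0) := by
          simpa using hεc.sub (tendsto_const_nhds (x := ε t))
        simpa using h0.abs
      have := (this.mul_const ‖y - z₀‖).div_const (ε t)
      simpa using this
    apply squeeze_zero' ?_ ?_ hg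
    · exact Filter.Eventually.of_forall fun s => norm_nonneg _
    · filter_upwards [self_mem_nhdsWithin] with s hs
      have := hdiff t ht s hs
      rw [le_div_iff₀ (hεpos t ht)]
      linarith [this]
  -- bound on u
  have hub : ∀ t ∈ Ici (0:ℝ), ‖u t‖ ≤ ‖y - z₀‖ / ε t := by
    intro t ht
    have h1 := hAlow t ht (u t)
    rw [hu t ht] at h1
    rw [le_div_iff₀ (hεpos t ht)]
    calc ‖u t‖ * ε t = ε t * ‖u t‖ := mul_comm _ _
      _ ≤ ‖x t - z₀‖ := h1
      _ ≤ ‖y - z₀‖ := hxz t ht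
  refine ⟨fun t => (-ε' t) • u t, ?_, ?_, ?_⟩
  · -- differentiability
    intro t ht
    rw [hasDerivWithinAt_iff_isLittleO]
    set l := nhdsWithin t (Ici (0:ℝ)) with hl
    have hmem : ∀ᶠ s in l, s ∈ Ici (0:ℝ) := self_mem_nhdsWithin
    have hεo : (fun s => ε s - ε t - (s - t) * ε' t) =o[l] fun s => s - t := by
      have := hasDerivWithinAt_iff_isLittleO.mp (hεd t ht)
      simpa [smul_eq_mul] using this
    have hεO : (fun s => ε s - ε t) =O[l] fun s => s - t :=
      ((hεd t ht).hasFDerivWithinAt).isBigO_sub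
    have hε := hεpos t ht
    have hxO : (fun s => x s - x t) =O[l] fun s => s - t := by
      refine (Asymptotics.IsBigO.of_bound (‖y - z₀‖ / ε t) ?_).trans hεO
      filter_upwards [hmem] with s hs
      have hd := hdiff t ht s hs
      rw [Real.norm_eq_abs, div_mul_eq_mul_div, le_div_iff₀ hε]
      nlinarith [norm_nonneg (x s - x t)]
    have hcx : Filter.Tendsto x l (nhds (x t)) := hxcont t ht
    have hx0 : Filter.Tendsto (fun s => x s - x t) l (nhds 0) := by
      simpa using hcx.sub (tendsto_const_nhds (x := x t))
    have hR : (fun s => F (x s) - F (x t) - F' (x t) (x s - x t)) =o[l] fun s => s - t := by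
      have h1 := (hF' (x t)).isLittleO
      have h2 := h1.comp_tendsto (hxcont t ht)
      exact h2.trans_isBigO hxO
    have h2nd : (fun s => (ε s - ε t) • (x s - x t)) =o[l] fun s => s - t := by
      have h0 : (fun s => x s - x t) =o[l] (fun _ => (1:ℝ)) :=
        (Asymptotics.isLittleO_one_iff ℝ).mpr hx0
      have := hεO.smul_isLittleO h0
      simpa using this
    have h3rd : (fun s => (ε s - ε t - (s - t) * ε' t) • (x t - z₀)) =o[l] fun s => s - t := by
      have hO : (fun s => (ε s - ε t - (s - t) * ε' t) • (x t - z₀)) =O[l]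
          fun s => ε s - ε t - (s - t) * ε' t := by
        apply Asymptotics.isBigO_of_le' (c := ‖x t - z₀‖)
        intro s
        rw [norm_smul, Real.norm_eq_abs]
        exact le_of_eq (mul_comm _ _)
      exact hO.trans_isLittleO hεo
    have hsum := (hR.neg_left.sub h2nd).sub h3rd
    have key : ∀ s ∈ Ici (0:ℝ), A t (x s - x t - (s - t) • ((-ε' t) • u t))
        = -(F (x s) - F (x t) - F' (x t) (x s - x t)) - (ε s - ε t) • (x s - x t)
          - (ε s - ε t - (s - t) * ε' t) • (x t - z₀) := by
      intro s hs
      have hAu : A t (u t) = x t - z₀ := hu t ht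
      rw [map_sub, map_smul, map_smul, hAu, hA]
      rw [e2 t ht s hs]
      module
    have hAo : (fun s => A t (x s - x t - (s - t) • ((-ε' t) • u t))) =o[l] fun s => s - t := by
      refine hsum.congr' ?_ (Filter.EventuallyEq.refl _ _)
      filter_upwards [hmem] with s hs
      exact (key s hs).symm
    refine Asymptotics.IsBigO.trans_isLittleO ?_ hAo
    apply Asymptotics.isBigO_of_le' (c := (ε t)⁻¹)
    intro s
    have hlow := hAlow t ht (x s - x t - (s - t) • ((-ε' t) • u t))
    rw [← div_eq_inv_mul, le_div_iff₀ hε]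
    nlinarith [norm_nonneg (x s - x t - (s - t) • ((-ε' t) • u t))]
  · -- continuity of the derivative
    have hucont : ContinuousOn u (Ici (0:ℝ)) := by
      intro t ht
      rw [ContinuousWithinAt, tendsto_iff_norm_sub_tendsto_zero]
      set l := nhdsWithin t (Ici (0:ℝ)) with hl
      have hεc : Filter.Tendsto ε l (nhds (ε t)) := (hεd t ht).continuousWithinAt
      have hε := hεpos t ht
      have hbound : ∀ s ∈ Ici (0:ℝ), ‖u s - u t‖ ≤
          (‖x s - x t‖ + (‖F' (x t) - F' (x s)‖ + |ε t - ε s|) * (‖y - z₀‖ / ε s)) / ε t := by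
        intro s hs
        have hεs := hεpos s hs
        have idt : A t (u s) - A t (u t) =
            (x s - x t) + (F' (x t) - F' (x s)) (u s) + (ε t - ε s) • u s := by
          rw [hu t ht, ContinuousLinearMap.sub_apply, hA]
          have h5 : F' (x s) (u s) = x s - z₀ - ε s • u s := by
            have := hu s hs; rw [hA] at this
            linear_combination (norm := abel) this
          rw [h5]
          module
        have hlow := hAlow t ht (u s - u t)
        rw [map_sub, idt] at hlow
        have hn : ‖(x s - x t) + (F' (x t) - F' (x s)) (u s) + (ε t - ε s) • u s‖ ≤
            ‖x s - x t‖ + (‖F' (x t) - F' (x s)‖ + |ε t - ε s|) * (‖y - z₀‖ / ε s) := by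
          have hus : ‖u s‖ ≤ ‖y - z₀‖ / ε s := hub s hs
          have h6 : ‖(F' (x t) - F' (x s)) (u s)‖ ≤ ‖F' (x t) - F' (x s)‖ * ‖u s‖ :=
            ContinuousLinearMap.le_opNorm _ _
          have h7 : ‖(ε t - ε s) • u s‖ = |ε t - ε s| * ‖u s‖ := by
            rw [norm_smul, Real.norm_eq_abs]
          calc ‖(x s - x t) + (F' (x t) - F' (x s)) (u s) + (ε t - ε s) • u s‖
              ≤ ‖x s - x t‖ + ‖(F' (x t) - F' (x s)) (u s)‖ + ‖(ε t - ε s) • u s‖ :=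
                norm_add₃_le
            _ ≤ ‖x s - x t‖ + (‖F' (x t) - F' (x s)‖ + |ε t - ε s|) * (‖y - z₀‖ / ε s) := by
                rw [h7]
                have hnn1 : (0:ℝ) ≤ ‖F' (x t) - F' (x s)‖ := norm_nonneg _
                have hnn2 : (0:ℝ) ≤ |ε t - ε s| := abs_nonneg _
                have hnn3 : (0:ℝ) ≤ ‖u s‖ := norm_nonneg _
                nlinarith [mul_le_mul_of_nonneg_left hus hnn1,
                  mul_le_mul_of_nonneg_left hus hnn2]
        rw [le_div_iff₀ hε]
        calc ‖u s - u t‖ * ε t = ε t * ‖u s - u t‖ := mul_comm _ _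
          _ ≤ ‖(x s - x t) + (F' (x t) - F' (x s)) (u s) + (ε t - ε s) • u s‖ := hlow
          _ ≤ _ := hn
      have hg : Filter.Tendsto
          (fun s => (‖x s - x t‖ + (‖F' (x t) - F' (x s)‖ + |ε t - ε s|) * (‖y - z₀‖ / ε s)) / ε t)
          l (nhds 0) := by
        have hcx : Filter.Tendsto x l (nhds (x t)) := hxcont t ht
        have t1 : Filter.Tendsto (fun s => ‖x s - x t‖) l (nhds 0) := by
          have h := hcx.sub (tendsto_const_nhds (x := x t))
          simpa using h.norm
        have tF : Filter.Tendsto (fun s => F' (x s)) l (nhds (F' (x t))) :=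
          hF'cont.continuousAt.comp_continuousWithinAt (hxcont t ht)
        have t2 : Filter.Tendsto (fun s => ‖F' (x t) - F' (x s)‖) l (nhds 0) := by
          have h := ((tendsto_const_nhds (x := F' (x t))).sub tF).norm
          simp only [sub_self, norm_zero] at h
          exact h
        have t3 : Filter.Tendsto (fun s => |ε t - ε s|) l (nhds 0) := by
          have h := (tendsto_const_nhds (x := ε t)).sub hεc
          simpa using h.abs
        have t4 : Filter.Tendsto (fun s => ‖y - z₀‖ / ε s) l (nhds (‖y - z₀‖ / ε t)) :=
          (tendsto_const_nhds (x := ‖y - z₀‖)).div hεc (ne_of_gt hε)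
        have := ((t1.add ((t2.add t3).mul t4)).div_const (ε t))
        simpa using this
      apply squeeze_zero' ?_ ?_ hg
      · exact Filter.Eventually.of_forall fun s => norm_nonneg _
      · filter_upwards [self_mem_nhdsWithin] with s hs
        exact hbound s hs
    exact (hε'c.neg).smul hucont
  · -- the norm bound
    intro t ht
    rw [norm_smul, Real.norm_eq_abs, abs_neg]
    have h1 := hub t ht
    have h2 : |ε' t| * ‖u t‖ ≤ |ε' t| * (‖y - z₀‖ / ε t) :=
      mul_le_mul_of_nonneg_left h1 (abs_nonneg _)
    calc |ε' t| * ‖u t‖ ≤ |ε' t| * (‖y - z₀‖ / ε t) := h2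
      _ = |ε' t| / ε t * ‖y - z₀‖ := by ring
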